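/- For n ∈ ℕ and z = x + iξ ∈ ℂ, the Gabor transform of the n-th Hermite function satisfies ⟨h_n, π(z) h₀⟩ = ∫_ℝ h_n(t) e^{−2πiξt} h₀(t − x) dt = e^{−iπxξ − (π/2)|z|²} √(πⁿ/n!) · z̄ⁿ, where z̄ = x − iξ. -/

import Mathlib

open MeasureTheory

/-- The `n`-th Hermite function, defined via the Rodrigues formula:
`hₙ(t) = (2^{1/4}/√(n!)) (−1/(2√π))ⁿ e^{π t²} (dⁿ/dtⁿ)(e^{−2π t²})`. -/
noncomputable def hermiteFun (n : ℕ) (t : ℝ) : ℝ :=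
  (2 : ℝ) ^ ((1 : ℝ) / 4) / Real.sqrt (n.factorial : ℝ) *
    (-1 / (2 * Real.sqrt Real.pi)) ^ n *
      (Real.exp (Real.pi * t ^ 2) *
        iteratedDeriv n (fun s : ℝ => Real.exp (-(2 * Real.pi * s ^ 2))) t)

/-! ### Auxiliary material -/

/-- Polynomials appearing in the derivatives of the Gaussian `e^{-2πt²}`. -/
noncomputable def gaussPoly : ℕ → Polynomial ℝ
  | 0 => 1
  | k + 1 => Polynomial.derivative (gaussPoly k)
      - Polynomial.C (4 * Real.pi) * Polynomial.X * gaussPoly k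

lemma hasDerivAt_gaussPolyMul (k : ℕ) (t : ℝ) :
    HasDerivAt (fun t : ℝ => (gaussPoly k).eval t * Real.exp (-(2 * Real.pi * t ^ 2)))
      ((gaussPoly (k + 1)).eval t * Real.exp (-(2 * Real.pi * t ^ 2))) t := by
  have hexp : HasDerivAt (fun t : ℝ => Real.exp (-(2 * Real.pi * t ^ 2)))
      (Real.exp (-(2 * Real.pi * t ^ 2)) * (-(2 * Real.pi * (2 * t)))) t := by
    have h : HasDerivAt (fun t : ℝ => -(2 * Real.pi * t ^ 2)) (-(2 * Real.pi * (2 * t))) t := by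
      simpa [mul_comm, mul_assoc, mul_left_comm] using
        ((hasDerivAt_pow 2 t).const_mul (2 * Real.pi)).fun_neg
    exact h.exp
  have := ((gaussPoly k).hasDerivAt t).fun_mul hexp
  refine this.congr_deriv ?_
  simp only [gaussPoly, Polynomial.eval_sub, Polynomial.eval_mul, Polynomial.eval_C,
    Polynomial.eval_X]
  ring

lemma iteratedDeriv_gauss (k : ℕ) :
    iteratedDeriv k (fun s : ℝ => Real.exp (-(2 * Real.pi * s ^ 2)))
      = fun t => (gaussPoly k).eval t * Real.exp (-(2 * Real.pi * t ^ 2)) := by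
  induction k with
  | zero => funext t; simp [gaussPoly]
  | succ k ih =>
    rw [iteratedDeriv_succ, ih]
    funext t
    exact (hasDerivAt_gaussPolyMul k t).deriv

lemma integrable_pow_mul_cexp (n : ℕ) (c : ℂ) :
    Integrable fun t : ℝ =>
      (t : ℂ) ^ n * Complex.exp (-(2 * Real.pi : ℂ) * t ^ 2 + c * t) := by
  have hπ : (0 : ℝ) < Real.pi := Real.pi_pos
  have hint : Integrable fun t : ℝ =>
      Real.exp (c.re ^ 2 / (4 * Real.pi)) *
        (t ^ (2 * n) * Real.exp (-Real.pi * t ^ 2) + Real.exp (-Real.pi * t ^ 2)) := by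
    refine Integrable.const_mul (Integrable.add ?_ (integrable_exp_neg_mul_sq hπ)) _
    have h0 : (-1 : ℝ) < ((2 * n : ℕ) : ℝ) :=
      lt_of_lt_of_le (by norm_num) (Nat.cast_nonneg _)
    have := integrable_rpow_mul_exp_neg_mul_sq hπ h0
    simp only [Real.rpow_natCast] at this
    exact this
  apply hint.mono'
  · apply Continuous.aestronglyMeasurable
    continuity
  · filter_upwards with t
    have hre : (-(2 * Real.pi : ℂ) * t ^ 2 + c * t).re = -(2 * Real.pi * t ^ 2) + c.re * t := by
      have h : (-(2 * Real.pi : ℂ) * t ^ 2 + c * t) = ((-(2 * Real.pi * t ^ 2) : ℝ) : ℂ) + c * t := by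
        push_cast; ring
      rw [h, Complex.add_re, Complex.ofReal_re, Complex.mul_re, Complex.ofReal_re,
        Complex.ofReal_im]
      ring
    have hnorm : ‖(t : ℂ) ^ n * Complex.exp (-(2 * Real.pi : ℂ) * t ^ 2 + c * t)‖
        = |t| ^ n * Real.exp (-(2 * Real.pi * t ^ 2) + c.re * t) := by
      rw [norm_mul, norm_pow, Complex.norm_real, Real.norm_eq_abs,
        Complex.norm_exp, hre]
    rw [hnorm]
    have ht2n : (0 : ℝ) ≤ t ^ (2 * n) := by
      rw [pow_mul]; positivity
    have h1 : |t| ^ n ≤ t ^ (2 * n) + 1 := by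
      rcases le_or_gt (|t|) 1 with h | h
      · calc |t| ^ n ≤ 1 ^ n := pow_le_pow_left₀ (abs_nonneg t) h n
          _ = 1 := one_pow n
          _ ≤ t ^ (2 * n) + 1 := by linarith
      · calc |t| ^ n ≤ |t| ^ (2 * n) :=
            pow_le_pow_right₀ h.le (by omega)
          _ = t ^ (2 * n) := by
            rw [← abs_pow, abs_of_nonneg ht2n]
          _ ≤ t ^ (2 * n) + 1 := by linarith
    have h2 : Real.exp (-(2 * Real.pi * t ^ 2) + c.re * t)
        ≤ Real.exp (c.re ^ 2 / (4 * Real.pi)) * Real.exp (-Real.pi * t ^ 2) := by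
      rw [← Real.exp_add]
      apply Real.exp_le_exp.2
      have hπ' : Real.pi ≠ 0 := ne_of_gt hπ
      have key : 0 ≤ Real.pi * t ^ 2 - c.re * t + c.re ^ 2 / (4 * Real.pi) := by
        have h4 : 0 ≤ (2 * Real.pi * t - c.re) ^ 2 / (4 * Real.pi) :=
          div_nonneg (sq_nonneg _) (by linarith)
        have heq2 : (2 * Real.pi * t - c.re) ^ 2 / (4 * Real.pi)
            = Real.pi * t ^ 2 - c.re * t + c.re ^ 2 / (4 * Real.pi) := by
          field_simp
          ring
        linarith [heq2 ▸ h4]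
      nlinarith
    calc |t| ^ n * Real.exp (-(2 * Real.pi * t ^ 2) + c.re * t)
        ≤ (t ^ (2 * n) + 1) * (Real.exp (c.re ^ 2 / (4 * Real.pi)) * Real.exp (-Real.pi * t ^ 2)) :=
          mul_le_mul h1 h2 (Real.exp_pos _).le (by positivity)
      _ = Real.exp (c.re ^ 2 / (4 * Real.pi)) *
            (t ^ (2 * n) * Real.exp (-Real.pi * t ^ 2) + Real.exp (-Real.pi * t ^ 2)) := by ring

lemma integrable_poly_mul_cexp (p : Polynomial ℝ) (c : ℂ) :
    Integrable fun t : ℝ =>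
      ((p.eval t : ℝ) : ℂ) * Complex.exp (-(2 * Real.pi : ℂ) * t ^ 2 + c * t) := by
  induction p using Polynomial.induction_on' with
  | add p q hp hq =>
    apply (hp.add hq).congr
    filter_upwards with t
    simp only [Pi.add_apply, Polynomial.eval_add]
    push_cast
    ring
  | monomial k a =>
    have := (integrable_pow_mul_cexp k c).const_mul (a : ℂ)
    apply this.congr
    filter_upwards with t
    rw [Polynomial.eval_monomial]
    push_cast
    ring

lemma key_integral (c : ℂ) (k : ℕ) :
    ∫ t : ℝ, ((iteratedDeriv k (fun s : ℝ => Real.exp (-(2 * Real.pi * s ^ 2))) t : ℝ) : ℂ)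
        * Complex.exp (c * t)
      = (-c) ^ k * ∫ t : ℝ, Complex.exp (-(2 * Real.pi : ℂ) * t ^ 2 + c * t) := by
  induction k with
  | zero =>
    simp only [iteratedDeriv_zero, pow_zero, one_mul]
    apply integral_congr_ae
    filter_upwards with t
    rw [Complex.ofReal_exp, ← Complex.exp_add]
    congr 1
    push_cast
    ring
  | succ k ih =>
    have hu : ∀ t : ℝ, HasDerivAt (fun t : ℝ => Complex.exp (c * t))
        (c * Complex.exp (c * t)) t := by
      intro t
      have h1 : HasDerivAt (fun y : ℝ => ((y : ℝ) : ℂ)) 1 t := by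
        simpa using (hasDerivAt_id t).ofReal_comp
      simpa [mul_comm] using (h1.const_mul c).cexp
    have hv : ∀ t : ℝ, HasDerivAt
        (fun t : ℝ => ((iteratedDeriv k (fun s : ℝ => Real.exp (-(2 * Real.pi * s ^ 2))) t : ℝ) : ℂ))
        ((iteratedDeriv (k + 1) (fun s : ℝ => Real.exp (-(2 * Real.pi * s ^ 2))) t : ℝ) : ℂ) t := by
      intro t
      rw [iteratedDeriv_gauss, iteratedDeriv_gauss]
      exact (hasDerivAt_gaussPolyMul k t).ofReal_comp
    have heq : ∀ (m : ℕ) (t : ℝ),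
        Complex.exp (c * t) *
            ((iteratedDeriv m (fun s : ℝ => Real.exp (-(2 * Real.pi * s ^ 2))) t : ℝ) : ℂ)
          = (((gaussPoly m).eval t : ℝ) : ℂ) * Complex.exp (-(2 * Real.pi : ℂ) * t ^ 2 + c * t) := by
      intro m t
      rw [iteratedDeriv_gauss]
      rw [Complex.ofReal_mul, Complex.ofReal_exp, Complex.exp_add]
      have h : ((-(2 * Real.pi * t ^ 2) : ℝ) : ℂ) = -(2 * Real.pi : ℂ) * t ^ 2 := by
        push_cast; ring
      rw [h]
      ring
    have huv' : Integrable ((fun t : ℝ => Complex.exp (c * t)) *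
        fun t : ℝ =>
          ((iteratedDeriv (k + 1) (fun s : ℝ => Real.exp (-(2 * Real.pi * s ^ 2))) t : ℝ) : ℂ)) := by
      apply (integrable_poly_mul_cexp (gaussPoly (k + 1)) c).congr
      filter_upwards with t
      exact (heq (k + 1) t).symm
    have hu'v : Integrable ((fun t : ℝ => c * Complex.exp (c * t)) *
        fun t : ℝ =>
          ((iteratedDeriv k (fun s : ℝ => Real.exp (-(2 * Real.pi * s ^ 2))) t : ℝ) : ℂ)) := by
      apply ((integrable_poly_mul_cexp (gaussPoly k) c).const_mul c).congr
      filter_upwards with t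
      simp only [Pi.mul_apply]
      rw [mul_assoc, heq k t]
    have huv : Integrable ((fun t : ℝ => Complex.exp (c * t)) *
        fun t : ℝ =>
          ((iteratedDeriv k (fun s : ℝ => Real.exp (-(2 * Real.pi * s ^ 2))) t : ℝ) : ℂ)) := by
      apply (integrable_poly_mul_cexp (gaussPoly k) c).congr
      filter_upwards with t
      exact (heq k t).symm
    have ibp := MeasureTheory.integral_mul_deriv_eq_deriv_mul_of_integrable (fun t _ => hu t) (fun t _ => hv t) huv' hu'v huv
    calc ∫ t : ℝ, ((iteratedDeriv (k+1) (fun s : ℝ => Real.exp (-(2 * Real.pi * s ^ 2))) t : ℝ) : ℂ)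
          * Complex.exp (c * t)
        = ∫ t : ℝ, Complex.exp (c * t)
            * ((iteratedDeriv (k+1) (fun s : ℝ => Real.exp (-(2 * Real.pi * s ^ 2))) t : ℝ) : ℂ) := by
          apply integral_congr_ae; filter_upwards with t; ring
      _ = - ∫ t : ℝ, c * Complex.exp (c * t)
            * ((iteratedDeriv k (fun s : ℝ => Real.exp (-(2 * Real.pi * s ^ 2))) t : ℝ) : ℂ) := ibp
      _ = -c * ∫ t : ℝ, ((iteratedDeriv k (fun s : ℝ => Real.exp (-(2 * Real.pi * s ^ 2))) t : ℝ) : ℂ)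
            * Complex.exp (c * t) := by
          rw [← integral_neg, ← integral_const_mul]
          apply integral_congr_ae; filter_upwards with t; ring
      _ = (-c) ^ (k + 1) * ∫ t : ℝ, Complex.exp (-(2 * Real.pi : ℂ) * t ^ 2 + c * t) := by
          rw [ih]; ring

lemma real_sqrt_pow (a : ℝ) (h : 0 ≤ a) (n : ℕ) :
    Real.sqrt (a ^ n) = Real.sqrt a ^ n := by
  induction n with
  | zero => simp
  | succ k ih => rw [pow_succ, Real.sqrt_mul (pow_nonneg h k), ih, pow_succ]

/-- The Gabor transform of the `n`-th Hermite function: for `z = x + iξ`,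
`⟨hₙ, π(z)h₀⟩ = ∫_ℝ hₙ(t) e^{−2πiξt} h₀(t−x) dt
  = e^{−iπxξ − (π/2)|z|²} √(πⁿ/n!) z̄ⁿ` with `z̄ = x − iξ`. -/
theorem gabor_transform_hermite (n : ℕ) (x ξ : ℝ) :
    ∫ t : ℝ,
        (hermiteFun n t : ℂ) * Complex.exp (-(2 * Real.pi * Complex.I * ξ * t)) *
          (hermiteFun 0 (t - x) : ℂ)
      = Complex.exp (-(Complex.I * Real.pi * x * ξ) - Real.pi / 2 * (x ^ 2 + ξ ^ 2)) *
          (Real.sqrt (Real.pi ^ n / (n.factorial : ℝ)) : ℂ) *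
            ((x : ℂ) - ξ * Complex.I) ^ n := by
  have hπ : (0 : ℝ) < Real.pi := Real.pi_pos
  set w : ℂ := (x : ℂ) - ξ * Complex.I with hw
  set c : ℂ := 2 * (Real.pi : ℂ) * w with hc
  have hexp : ∀ t : ℝ,
      ((Real.exp (Real.pi * t ^ 2) : ℝ) : ℂ) *
          Complex.exp (-(2 * Real.pi * Complex.I * ξ * t)) *
          ((Real.exp (-(Real.pi * (t - x) ^ 2)) : ℝ) : ℂ)
        = Complex.exp (-(Real.pi : ℂ) * x ^ 2) * Complex.exp (c * t) := by
    intro t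
    rw [Complex.ofReal_exp, Complex.ofReal_exp, ← Complex.exp_add, ← Complex.exp_add,
      ← Complex.exp_add]
    congr 1
    rw [hc, hw]
    push_cast
    ring
  have hpt : ∀ t : ℝ,
      (hermiteFun n t : ℂ) * Complex.exp (-(2 * Real.pi * Complex.I * ξ * t)) *
          (hermiteFun 0 (t - x) : ℂ)
        = (((2 : ℝ) ^ ((1 : ℝ) / 4) / Real.sqrt (n.factorial : ℝ)
              * (-1 / (2 * Real.sqrt Real.pi)) ^ n : ℝ) : ℂ)
            * (((2 : ℝ) ^ ((1 : ℝ) / 4) : ℝ) : ℂ)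
            * Complex.exp (-(Real.pi : ℂ) * x ^ 2)
            * (((iteratedDeriv n (fun s : ℝ => Real.exp (-(2 * Real.pi * s ^ 2))) t : ℝ) : ℂ)
                * Complex.exp (c * t)) := by
    intro t
    have hn : (hermiteFun n t : ℂ)
        = (((2 : ℝ) ^ ((1 : ℝ) / 4) / Real.sqrt (n.factorial : ℝ)
              * (-1 / (2 * Real.sqrt Real.pi)) ^ n : ℝ) : ℂ)
            * ((Real.exp (Real.pi * t ^ 2) : ℝ) : ℂ)
            * ((iteratedDeriv n (fun s : ℝ => Real.exp (-(2 * Real.pi * s ^ 2))) t : ℝ) : ℂ) := by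
      simp only [hermiteFun]
      push_cast
      ring
    have h0 : (hermiteFun 0 (t - x) : ℂ)
        = (((2 : ℝ) ^ ((1 : ℝ) / 4) : ℝ) : ℂ)
            * ((Real.exp (-(Real.pi * (t - x) ^ 2)) : ℝ) : ℂ) := by
      have hE : Real.exp (Real.pi * (t - x) ^ 2) * Real.exp (-(2 * Real.pi * (t - x) ^ 2))
          = Real.exp (-(Real.pi * (t - x) ^ 2)) := by
        rw [← Real.exp_add]; ring_nf
      simp only [hermiteFun, iteratedDeriv_zero, pow_zero, Nat.factorial_zero, Nat.cast_one,
        Real.sqrt_one, div_one, mul_one, one_mul]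
      rw [hE]
      push_cast
      ring
    rw [hn, h0]
    linear_combination
      ((((2 : ℝ) ^ ((1 : ℝ) / 4) / Real.sqrt (n.factorial : ℝ)
          * (-1 / (2 * Real.sqrt Real.pi)) ^ n : ℝ) : ℂ)
        * (((2 : ℝ) ^ ((1 : ℝ) / 4) : ℝ) : ℂ)
        * ((iteratedDeriv n (fun s : ℝ => Real.exp (-(2 * Real.pi * s ^ 2))) t : ℝ) : ℂ))
        * hexp t
  simp only [hpt]
  rw [integral_const_mul, key_integral c n]
  have hgauss : ∫ t : ℝ, Complex.exp (-(2 * Real.pi : ℂ) * t ^ 2 + c * t)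
      = ((Real.sqrt (1 / 2) : ℝ) : ℂ) * Complex.exp (c ^ 2 / (8 * Real.pi)) := by
    have hbre : (-(2 * (Real.pi : ℂ))).re < 0 := by
      simp [Real.pi_pos]
    have h := integral_cexp_quadratic hbre c 0
    simp only [add_zero] at h
    rw [h]
    have hπ0 : (Real.pi : ℂ) ≠ 0 := by exact_mod_cast Real.pi_ne_zero
    have h2 : ((Real.pi : ℂ) / -(-(2 * (Real.pi : ℂ)))) = (((1 : ℝ) / 2 : ℝ) : ℂ) := by
      rw [neg_neg]
      push_cast
      field_simp
    have h3 : (0 : ℂ) - c ^ 2 / (4 * -(2 * (Real.pi : ℂ))) = c ^ 2 / (8 * Real.pi) := by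
      rw [show (4 : ℂ) * -(2 * (Real.pi : ℂ)) = -(8 * (Real.pi : ℂ)) by ring, div_neg,
        zero_sub, neg_neg]
    rw [h2, h3]
    congr 1
    rw [Real.sqrt_eq_rpow, Complex.ofReal_cpow (by norm_num) (1 / 2)]
    norm_num
  rw [hgauss]
  have hc2 : Complex.exp (-(Real.pi : ℂ) * x ^ 2) * Complex.exp (c ^ 2 / (8 * Real.pi))
      = Complex.exp (-(Complex.I * Real.pi * x * ξ)
          - Real.pi / 2 * ((x : ℂ) ^ 2 + (ξ : ℂ) ^ 2)) := by
    rw [← Complex.exp_add]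
    congr 1
    have hπ0 : (Real.pi : ℂ) ≠ 0 := by exact_mod_cast Real.pi_ne_zero
    have hc28 : c ^ 2 / (8 * (Real.pi : ℂ)) = (Real.pi : ℂ) / 2 * w ^ 2 := by
      rw [hc]; field_simp; ring
    rw [hc28, hw]
    linear_combination ((Real.pi : ℂ) / 2 * (ξ : ℂ) ^ 2) * Complex.I_sq
  have hcn : (-c) ^ n = (((-(2 * Real.pi)) ^ n : ℝ) : ℂ) * w ^ n := by
    have : -c = ((-(2 * Real.pi) : ℝ) : ℂ) * w := by rw [hc]; push_cast; ring
    rw [this, mul_pow, Complex.ofReal_pow]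
  have hs : (2 : ℝ) ^ ((1 : ℝ) / 4) / Real.sqrt (n.factorial : ℝ)
        * (-1 / (2 * Real.sqrt Real.pi)) ^ n * (2 : ℝ) ^ ((1 : ℝ) / 4)
        * (-(2 * Real.pi)) ^ n * Real.sqrt (1 / 2)
      = Real.sqrt (Real.pi ^ n / (n.factorial : ℝ)) := by
    have hsπ : Real.sqrt Real.pi * Real.sqrt Real.pi = Real.pi :=
      Real.mul_self_sqrt Real.pi_pos.le
    have hsπ0 : Real.sqrt Real.pi ≠ 0 := by positivity
    have h1 : (-1 / (2 * Real.sqrt Real.pi)) ^ n * (-(2 * Real.pi)) ^ n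
        = Real.sqrt Real.pi ^ n := by
      rw [← mul_pow]
      congr 1
      rw [div_mul_eq_mul_div, div_eq_iff (by positivity : (2 * Real.sqrt Real.pi) ≠ 0)]
      linear_combination -2 * hsπ
    have h2 : (2 : ℝ) ^ ((1 : ℝ) / 4) * (2 : ℝ) ^ ((1 : ℝ) / 4) = Real.sqrt 2 := by
      have he : (1 : ℝ) / 4 + 1 / 4 = 1 / 2 := by norm_num
      rw [← Real.rpow_add (by norm_num : (0 : ℝ) < 2), he, Real.sqrt_eq_rpow]
    have h3 : Real.sqrt 2 * Real.sqrt (1 / 2) = 1 := by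
      rw [← Real.sqrt_mul (by norm_num : (0 : ℝ) ≤ 2)]
      norm_num
    have h4 : Real.sqrt (Real.pi ^ n) = Real.sqrt Real.pi ^ n :=
      real_sqrt_pow Real.pi Real.pi_pos.le n
    have h5 : Real.sqrt (Real.pi ^ n / (n.factorial : ℝ))
        = Real.sqrt (Real.pi ^ n) / Real.sqrt (n.factorial : ℝ) :=
      Real.sqrt_div (by positivity) _
    rw [h5, h4]
    calc (2 : ℝ) ^ ((1 : ℝ) / 4) / Real.sqrt (n.factorial : ℝ)
          * (-1 / (2 * Real.sqrt Real.pi)) ^ n * (2 : ℝ) ^ ((1 : ℝ) / 4)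
          * (-(2 * Real.pi)) ^ n * Real.sqrt (1 / 2)
        = ((2 : ℝ) ^ ((1 : ℝ) / 4) * (2 : ℝ) ^ ((1 : ℝ) / 4) * Real.sqrt (1 / 2))
            * ((-1 / (2 * Real.sqrt Real.pi)) ^ n * (-(2 * Real.pi)) ^ n)
            / Real.sqrt (n.factorial : ℝ) := by ring
      _ = Real.sqrt Real.pi ^ n / Real.sqrt (n.factorial : ℝ) := by
          rw [h2, h3, h1, one_mul]
  rw [hcn, ← hc2, ← hs]
  push_cast
  ring
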